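/- Consider a diagonal biquadratic tensor A ∈ ℝ^{2×2×2×2} with diagonal entries a_{1111} = 1, a_{1212} = α, a_{2121} = β, a_{2222} = γ, and suppose γ + 1 − α − β ≠ 0, with (γ−β)/(γ+1−α−β), (1−α)/(γ+1−α−β), (γ−α)/(γ+1−α−β), (1−β)/(γ+1−α−β) all strictly positive. Then λ = (γ − αβ)/(γ + 1 − α − β) is an M-eigenvalue of A, with M-eigenvectors x, y whose components satisfy x₁² = (γ−β)/(γ+1−α−β), x₂² = (1−α)/(γ+1−α−β), y₁² = (γ−α)/(γ+1−α−β), y₂² = (1−β)/(γ+1−α−β). -/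

import Mathlib

noncomputable section
open Finset

/-- The biquadratic form of a biquadratic tensor. -/
def bqForm {m n : ℕ} (A : Fin m → Fin n → Fin m → Fin n → ℝ)
    (x : Fin m → ℝ) (y : Fin n → ℝ) : ℝ :=
  ∑ i1, ∑ j1, ∑ i2, ∑ j2, A i1 j1 i2 j2 * x i1 * y j1 * x i2 * y j2

/-- (λ, x, y) is an M-eigenpair of the biquadratic tensor A. -/
def IsMEigenpair {m n : ℕ} (A : Fin m → Fin n → Fin m → Fin n → ℝ)
    (lam : ℝ) (x : Fin m → ℝ) (y : Fin n → ℝ) : Prop :=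
  (∑ i, x i ^ 2 = 1) ∧ (∑ j, y j ^ 2 = 1) ∧
  (∀ i, (∑ i1, ∑ j1, ∑ j2, A i1 j1 i j2 * x i1 * y j1 * y j2)
      + (∑ i2, ∑ j1, ∑ j2, A i j1 i2 j2 * y j1 * x i2 * y j2) = 2 * lam * x i) ∧
  (∀ j, (∑ i1, ∑ i2, ∑ j1, A i1 j1 i2 j * x i1 * y j1 * x i2)
      + (∑ i1, ∑ i2, ∑ j2, A i1 j i2 j2 * x i1 * x i2 * y j2) = 2 * lam * y j)

/-- λ is an M-eigenvalue of A. -/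
def IsMEigenvalue {m n : ℕ} (A : Fin m → Fin n → Fin m → Fin n → ℝ) (lam : ℝ) : Prop :=
  ∃ x y, IsMEigenpair A lam x y

/-- A is a positive semi-definite biquadratic tensor. -/
def BQPosSemidef {m n : ℕ} (A : Fin m → Fin n → Fin m → Fin n → ℝ) : Prop :=
  ∀ x y, 0 ≤ bqForm A x y

/-- A is a positive definite biquadratic tensor. -/
def BQPosDef {m n : ℕ} (A : Fin m → Fin n → Fin m → Fin n → ℝ) : Prop :=
  ∀ x y, (∑ i, x i ^ 2 = 1) → (∑ j, y j ^ 2 = 1) → 0 < bqForm A x y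

/-- A diagonal biquadratic tensor in BQ(2,2) may have an M-eigenvalue distinct from
its diagonal entries: λ = (γ − αβ)/(γ + 1 − α − β). -/
theorem diagonal_bq22_extra_M_eigenvalue (α β γ : ℝ)
    (A : Fin 2 → Fin 2 → Fin 2 → Fin 2 → ℝ)
    (hdiag : ∀ i1 j1 i2 j2, ¬(i1 = i2 ∧ j1 = j2) → A i1 j1 i2 j2 = 0)
    (h11 : A 0 0 0 0 = 1) (h12 : A 0 1 0 1 = α)
    (h21 : A 1 0 1 0 = β) (h22 : A 1 1 1 1 = γ)
    (hden : γ + 1 - α - β ≠ 0)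
    (p1 : 0 < (γ - β) / (γ + 1 - α - β)) (p2 : 0 < (1 - α) / (γ + 1 - α - β))
    (p3 : 0 < (γ - α) / (γ + 1 - α - β)) (p4 : 0 < (1 - β) / (γ + 1 - α - β)) :
    ∃ x y : Fin 2 → ℝ,
      IsMEigenpair A ((γ - α * β) / (γ + 1 - α - β)) x y ∧
      x 0 ^ 2 = (γ - β) / (γ + 1 - α - β) ∧
      x 1 ^ 2 = (1 - α) / (γ + 1 - α - β) ∧
      y 0 ^ 2 = (γ - α) / (γ + 1 - α - β) ∧
      y 1 ^ 2 = (1 - β) / (γ + 1 - α - β) := by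
  refine ⟨![Real.sqrt ((γ - β) / (γ + 1 - α - β)), Real.sqrt ((1 - α) / (γ + 1 - α - β))], ![Real.sqrt ((γ - α) / (γ + 1 - α - β)), Real.sqrt ((1 - β) / (γ + 1 - α - β))], ?_, ?_, ?_, ?_, ?_⟩
  · have hxa : Real.sqrt ((γ - β) / (γ + 1 - α - β)) * Real.sqrt ((γ - β) / (γ + 1 - α - β)) = (γ - β) / (γ + 1 - α - β) := Real.mul_self_sqrt p1.le
    have hxb : Real.sqrt ((1 - α) / (γ + 1 - α - β)) * Real.sqrt ((1 - α) / (γ + 1 - α - β)) = (1 - α) / (γ + 1 - α - β) := Real.mul_self_sqrt p2.le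
    have hyc : Real.sqrt ((γ - α) / (γ + 1 - α - β)) * Real.sqrt ((γ - α) / (γ + 1 - α - β)) = (γ - α) / (γ + 1 - α - β) := Real.mul_self_sqrt p3.le
    have hyd : Real.sqrt ((1 - β) / (γ + 1 - α - β)) * Real.sqrt ((1 - β) / (γ + 1 - α - β)) = (1 - β) / (γ + 1 - α - β) := Real.mul_self_sqrt p4.le
    have k1 : (γ - α) / (γ + 1 - α - β) + α * ((1 - β) / (γ + 1 - α - β)) = (γ - α * β) / (γ + 1 - α - β) := by field_simp; ring
    have k2 : β * ((γ - α) / (γ + 1 - α - β)) + γ * ((1 - β) / (γ + 1 - α - β)) = (γ - α * β) / (γ + 1 - α - β) := by field_simp; ring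
    have k3 : (γ - β) / (γ + 1 - α - β) + β * ((1 - α) / (γ + 1 - α - β)) = (γ - α * β) / (γ + 1 - α - β) := by field_simp; ring
    have k4 : α * ((γ - β) / (γ + 1 - α - β)) + γ * ((1 - α) / (γ + 1 - α - β)) = (γ - α * β) / (γ + 1 - α - β) := by field_simp; ring
    have z : ∀ i1 j1 i2 j2 : Fin 2, ¬(i1 = i2 ∧ j1 = j2) → A i1 j1 i2 j2 = 0 := hdiag
    refine ⟨?_, ?_, ?_, ?_⟩
    · simp only [Fin.sum_univ_two, Matrix.cons_val_zero, Matrix.cons_val_one, Matrix.head_cons, sq]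
      rw [hxa, hxb, ← add_div, div_eq_one_iff_eq hden]; ring
    · simp only [Fin.sum_univ_two, Matrix.cons_val_zero, Matrix.cons_val_one, Matrix.head_cons, sq]
      rw [hyc, hyd, ← add_div, div_eq_one_iff_eq hden]; ring
    · intro i
      fin_cases i
      · simp only [Fin.sum_univ_two, Matrix.cons_val_zero, Matrix.cons_val_one, Matrix.head_cons,
          Fin.zero_eta, Fin.mk_one, h11, h12, h21, h22,
          z 0 0 0 1 (by decide), z 0 0 1 0 (by decide), z 0 0 1 1 (by decide),
          z 0 1 0 0 (by decide), z 0 1 1 0 (by decide), z 0 1 1 1 (by decide),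
          z 1 0 0 0 (by decide), z 1 0 0 1 (by decide), z 1 0 1 1 (by decide),
          z 1 1 0 0 (by decide), z 1 1 0 1 (by decide), z 1 1 1 0 (by decide)]
        linear_combination 2 * Real.sqrt ((γ - β) / (γ + 1 - α - β)) * hyc + 2 * α * Real.sqrt ((γ - β) / (γ + 1 - α - β)) * hyd + 2 * Real.sqrt ((γ - β) / (γ + 1 - α - β)) * k1
      · simp only [Fin.sum_univ_two, Matrix.cons_val_zero, Matrix.cons_val_one, Matrix.head_cons,
          Fin.zero_eta, Fin.mk_one, h11, h12, h21, h22,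
          z 0 0 0 1 (by decide), z 0 0 1 0 (by decide), z 0 0 1 1 (by decide),
          z 0 1 0 0 (by decide), z 0 1 1 0 (by decide), z 0 1 1 1 (by decide),
          z 1 0 0 0 (by decide), z 1 0 0 1 (by decide), z 1 0 1 1 (by decide),
          z 1 1 0 0 (by decide), z 1 1 0 1 (by decide), z 1 1 1 0 (by decide)]
        linear_combination 2 * β * Real.sqrt ((1 - α) / (γ + 1 - α - β)) * hyc + 2 * γ * Real.sqrt ((1 - α) / (γ + 1 - α - β)) * hyd + 2 * Real.sqrt ((1 - α) / (γ + 1 - α - β)) * k2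
    · intro j
      fin_cases j
      · simp only [Fin.sum_univ_two, Matrix.cons_val_zero, Matrix.cons_val_one, Matrix.head_cons,
          Fin.zero_eta, Fin.mk_one, h11, h12, h21, h22,
          z 0 0 0 1 (by decide), z 0 0 1 0 (by decide), z 0 0 1 1 (by decide),
          z 0 1 0 0 (by decide), z 0 1 1 0 (by decide), z 0 1 1 1 (by decide),
          z 1 0 0 0 (by decide), z 1 0 0 1 (by decide), z 1 0 1 1 (by decide),
          z 1 1 0 0 (by decide), z 1 1 0 1 (by decide), z 1 1 1 0 (by decide)]
        linear_combination 2 * Real.sqrt ((γ - α) / (γ + 1 - α - β)) * hxa + 2 * β * Real.sqrt ((γ - α) / (γ + 1 - α - β)) * hxb + 2 * Real.sqrt ((γ - α) / (γ + 1 - α - β)) * k3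
      · simp only [Fin.sum_univ_two, Matrix.cons_val_zero, Matrix.cons_val_one, Matrix.head_cons,
          Fin.zero_eta, Fin.mk_one, h11, h12, h21, h22,
          z 0 0 0 1 (by decide), z 0 0 1 0 (by decide), z 0 0 1 1 (by decide),
          z 0 1 0 0 (by decide), z 0 1 1 0 (by decide), z 0 1 1 1 (by decide),
          z 1 0 0 0 (by decide), z 1 0 0 1 (by decide), z 1 0 1 1 (by decide),
          z 1 1 0 0 (by decide), z 1 1 0 1 (by decide), z 1 1 1 0 (by decide)]
        linear_combination 2 * α * Real.sqrt ((1 - β) / (γ + 1 - α - β)) * hxa + 2 * γ * Real.sqrt ((1 - β) / (γ + 1 - α - β)) * hxb + 2 * Real.sqrt ((1 - β) / (γ + 1 - α - β)) * k4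
  · simpa [sq] using Real.mul_self_sqrt p1.le
  · simpa [sq] using Real.mul_self_sqrt p2.le
  · simpa [sq] using Real.mul_self_sqrt p3.le
  · simpa [sq] using Real.mul_self_sqrt p4.le
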